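/- There are infinitely many consensus methods that are regular, refinement-stable and non-contradictory: the set of families φ = (φ_{n,k})_{n ≥ 1, k ≥ 1}, where each φ_{n,k} maps profiles of k hierarchies on {1, …, n} to hierarchies on {1, …, n} and where every φ_{n,k} is unanimous, anonymous, neutral, refinement-stable and non-contradictory, is infinite. -/

import Mathlib

/-- Two clusters (nonempty subsets of the taxon set) are compatible if one
contains the other or they are disjoint. -/
def Compatible {X : Type*} (c₁ c₂ : Set X) : Prop :=
  c₁ ⊆ c₂ ∨ c₂ ⊆ c₁ ∨ c₁ ∩ c₂ = ∅

/-- A hierarchy on `X`: a family of pairwise compatible nonempty clusters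
containing `X` itself and all singletons (the cluster encoding of a rooted
phylogenetic `X`-tree). -/
def IsHierarchy {X : Type*} (H : Set (Set X)) : Prop :=
  (∀ c ∈ H, c.Nonempty) ∧
  (∀ c₁ ∈ H, ∀ c₂ ∈ H, Compatible c₁ c₂) ∧
  Set.univ ∈ H ∧
  ∀ x : X, {x} ∈ H

/-- The strict consensus of a profile: all clusters present in every tree. -/
def strictCons {X : Type*} {k : ℕ} (P : Fin k → Set (Set X)) : Set (Set X) :=
  {c | ∀ i, c ∈ P i}

/-- The majority-rule consensus `MR_p`: all clusters present in at least `p·k`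
of the input trees. -/
def majCons {X : Type*} (p : ℝ) {k : ℕ} (P : Fin k → Set (Set X)) : Set (Set X) :=
  {c | p * (k : ℝ) ≤ (({i : Fin k | c ∈ P i}).ncard : ℝ)}

/-- The loose consensus: all clusters present in at least one input tree and
compatible with every cluster of every input tree. -/
def looseCons {X : Type*} {k : ℕ} (P : Fin k → Set (Set X)) : Set (Set X) :=
  {c | (∃ i, c ∈ P i) ∧ ∀ j, ∀ c' ∈ P j, Compatible c c'}

/-- A hierarchy on `{1, …, n}` (as a subtype). -/
def Hier (n : ℕ) := {H : Set (Set (Fin n)) // IsHierarchy H}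


section Aux

variable {X : Type*}

lemma ncard_le_fin {K : ℕ} (A : Set (Fin K)) : A.ncard ≤ K := by
  simpa [Set.ncard_univ] using Set.ncard_le_ncard (Set.subset_univ A) Set.finite_univ

lemma inter_nonempty_of_half {K : ℕ} {A B : Set (Fin K)}
    (hA : (K : ℝ) / 2 < A.ncard) (hB : (K : ℝ) / 2 < B.ncard) :
    (A ∩ B).Nonempty := by
  rw [Set.nonempty_iff_ne_empty]
  intro h
  have hd : Disjoint A B := Set.disjoint_iff_inter_eq_empty.mpr h
  have h1 : (A ∪ B).ncard = A.ncard + B.ncard := Set.ncard_union_eq hd (Set.toFinite _) (Set.toFinite _)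
  have h2 : (A ∪ B).ncard ≤ K := ncard_le_fin _
  have : ((A.ncard + B.ncard : ℕ) : ℝ) ≤ (K : ℝ) := by
    rw [← h1]; exact_mod_cast h2
  push_cast at this
  linarith

lemma mem_majCons_iff {p : ℝ} {k : ℕ} {P : Fin k → Set (Set X)} {c : Set X} :
    c ∈ majCons p P ↔ p * (k : ℝ) ≤ (({i : Fin k | c ∈ P i}).ncard : ℝ) := Iff.rfl

lemma majCons_exists {p : ℝ} (hp : 1 / 2 < p) {k : ℕ} {P : Fin (k + 1) → Set (Set X)}
    {c : Set X} (hc : c ∈ majCons p P) : ∃ i, c ∈ P i := by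
  have h0 : (0 : ℝ) < p * ((k : ℝ) + 1) := by positivity
  rw [mem_majCons_iff] at hc
  push_cast at hc
  have : ({i : Fin (k + 1) | c ∈ P i}).ncard ≠ 0 := by
    intro h; rw [h] at hc; norm_num at hc; linarith
  obtain ⟨i, hi⟩ := Set.nonempty_of_ncard_ne_zero this
  exact ⟨i, hi⟩

lemma majCons_half {p : ℝ} (hp : 1 / 2 < p) {k : ℕ} {P : Fin (k + 1) → Set (Set X)}
    {c : Set X} (hc : c ∈ majCons p P) :
    ((k + 1 : ℕ) : ℝ) / 2 < (({i : Fin (k + 1) | c ∈ P i}).ncard : ℝ) := by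
  rw [mem_majCons_iff] at hc
  push_cast at hc ⊢
  nlinarith

lemma majCons_of_all {p : ℝ} (hp1 : p ≤ 1) {k : ℕ} {P : Fin (k + 1) → Set (Set X)}
    {c : Set X} (hc : ∀ i, c ∈ P i) : c ∈ majCons p P := by
  rw [mem_majCons_iff]
  have : {i : Fin (k + 1) | c ∈ P i} = Set.univ := by
    ext i; simp [hc i]
  rw [this, Set.ncard_univ]
  simp only [Nat.card_eq_fintype_card, Fintype.card_fin]
  have hk : (0 : ℝ) ≤ ((k + 1 : ℕ) : ℝ) := by positivity
  push_cast
  nlinarith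

lemma majCons_isHierarchy {p : ℝ} (hp : 1 / 2 < p) (hp1 : p ≤ 1) {n k : ℕ}
    (P : Fin (k + 1) → Hier (n + 1)) :
    IsHierarchy (majCons p (fun i => (P i).1)) := by
  refine ⟨fun c hc => ?_, fun c₁ h₁ c₂ h₂ => ?_, ?_, fun x => ?_⟩
  · obtain ⟨i, hi⟩ := majCons_exists hp hc
    exact (P i).2.1 c hi
  · obtain ⟨i, hi1, hi2⟩ := inter_nonempty_of_half (majCons_half hp h₁) (majCons_half hp h₂)
    exact (P i).2.2.1 c₁ hi1 c₂ hi2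
  · exact majCons_of_all hp1 (fun i => (P i).2.2.2.1)
  · exact majCons_of_all hp1 (fun i => (P i).2.2.2.2 x)

/-- The majority-rule consensus method as a consensus method. -/
noncomputable def phiMaj (p : ℝ) (hp : 1 / 2 < p) (hp1 : p ≤ 1) :
    ∀ n k : ℕ, (Fin (k + 1) → Hier (n + 1)) → Hier (n + 1) :=
  fun _ k P => ⟨majCons p (fun i => (P i).1), majCons_isHierarchy hp hp1 P⟩

end Aux

section Props

variable {X : Type*}

lemma phiMaj_unanimous {p : ℝ} (hp : 1 / 2 < p) (hp1 : p ≤ 1) {n k : ℕ}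
    (H : Hier (n + 1)) : phiMaj p hp hp1 n k (fun _ => H) = H := by
  apply Subtype.ext
  ext c
  constructor
  · intro hc
    obtain ⟨i, hi⟩ := majCons_exists hp hc
    exact hi
  · intro hc
    exact majCons_of_all hp1 (fun _ => hc)

lemma phiMaj_anonymous {p : ℝ} (hp : 1 / 2 < p) (hp1 : p ≤ 1) {n k : ℕ}
    (P : Fin (k + 1) → Hier (n + 1)) (π : Equiv.Perm (Fin (k + 1))) :
    phiMaj p hp hp1 n k (fun i => P (π i)) = phiMaj p hp hp1 n k P := by
  apply Subtype.ext
  ext c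
  have hs : ∀ c : Set (Fin (n+1)), {i : Fin (k+1) | c ∈ (P i).1}
      = π '' {i : Fin (k+1) | c ∈ (P (π i)).1} := by
    intro c
    ext i
    simp only [Set.mem_setOf_eq, Set.mem_image]
    constructor
    · intro h; exact ⟨π.symm i, by simpa using h, by simp⟩
    · rintro ⟨j, hj, rfl⟩; exact hj
  show p * _ ≤ _ ↔ p * _ ≤ _
  rw [hs c, Set.ncard_image_of_injective _ π.injective]

lemma phiMaj_neutral {p : ℝ} (hp : 1 / 2 < p) (hp1 : p ≤ 1) {n k : ℕ}
    (P P' : Fin (k + 1) → Hier (n + 1)) (σ : Equiv.Perm (Fin (n + 1)))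
    (h : ∀ i, (P' i).1 = (Set.image σ) '' (P i).1) :
    (phiMaj p hp hp1 n k P').1 = (Set.image σ) '' (phiMaj p hp hp1 n k P).1 := by
  have hinj : Function.Injective (Set.image σ : Set (Fin (n+1)) → Set (Fin (n+1))) :=
    Set.image_injective.mpr σ.injective
  have key : ∀ d : Set (Fin (n+1)),
      {i : Fin (k+1) | (σ '' d) ∈ (P' i).1} = {i : Fin (k+1) | d ∈ (P i).1} := by
    intro d
    ext i
    simp only [Set.mem_setOf_eq, h i, Set.mem_image]
    constructor
    · rintro ⟨e, he, hee⟩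
      rwa [hinj hee] at he
    · intro hd; exact ⟨d, hd, rfl⟩
  ext c
  constructor
  · intro hc
    obtain ⟨i, hi⟩ := majCons_exists hp hc
    rw [h i] at hi
    obtain ⟨d, hd, rfl⟩ := hi
    refine ⟨d, ?_, rfl⟩
    show p * _ ≤ _
    rw [← key d]
    exact hc
  · rintro ⟨d, hd, rfl⟩
    show p * _ ≤ _
    rw [key d]
    exact hd

lemma phiMaj_refinement {p : ℝ} (hp : 1 / 2 < p) (hp1 : p ≤ 1) {n k : ℕ}
    (P P' : Fin (k + 1) → Hier (n + 1)) (h : ∀ i, (P i).1 ⊆ (P' i).1) :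
    (phiMaj p hp hp1 n k P).1 ⊆ (phiMaj p hp hp1 n k P').1 := by
  intro c hc
  have hsub : {i : Fin (k+1) | c ∈ (P i).1} ⊆ {i : Fin (k+1) | c ∈ (P' i).1} :=
    fun i hi => h i hi
  have := Set.ncard_le_ncard hsub (Set.toFinite _)
  have hc' : p * ((k + 1 : ℕ) : ℝ) ≤ (({i : Fin (k+1) | c ∈ (P i).1}).ncard : ℝ) := hc
  show p * ((k + 1 : ℕ) : ℝ) ≤ (({i : Fin (k+1) | c ∈ (P' i).1}).ncard : ℝ)
  exact hc'.trans (by exact_mod_cast this)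

lemma phiMaj_noncontra {p : ℝ} (hp : 1 / 2 < p) (hp1 : p ≤ 1) {n k : ℕ}
    (P : Fin (k + 1) → Hier (n + 1)) (c : Set (Fin (n+1)))
    (hc : c ∈ (phiMaj p hp hp1 n k P).1) :
    ∃ i, ∀ c' ∈ (P i).1, Compatible c c' := by
  obtain ⟨i, hi⟩ := majCons_exists hp hc
  exact ⟨i, fun c' hc' => (P i).2.2.1 c hi c' hc'⟩

end Props

section Sep

/-- The trivial hierarchy on `Fin 3`. -/
def B3 : Set (Set (Fin 3)) := {s | s = Set.univ ∨ ∃ x, s = {x}}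

/-- The nontrivial cluster `{0,1}` on `Fin 3`. -/
def c01 : Set (Fin 3) := {0, 1}

/-- A hierarchy containing `{0,1}`. -/
def H3 : Set (Set (Fin 3)) := insert c01 B3

lemma compat_B3 : ∀ c₁ ∈ B3, ∀ c₂ ∈ B3, Compatible c₁ c₂ := by
  rintro c₁ (rfl | ⟨x, rfl⟩) c₂ (rfl | ⟨y, rfl⟩)
  · exact Or.inl (subset_refl _)
  · exact Or.inr (Or.inl (Set.subset_univ _))
  · exact Or.inl (Set.subset_univ _)
  · rcases eq_or_ne x y with rfl | hxy
    · exact Or.inl (subset_refl _)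
    · refine Or.inr (Or.inr ?_)
      ext z
      simp only [Set.mem_inter_iff, Set.mem_singleton_iff, Set.mem_empty_iff_false, iff_false]
      rintro ⟨rfl, rfl⟩; exact hxy rfl

lemma isHierarchy_B3 : IsHierarchy B3 := by
  refine ⟨?_, compat_B3, Or.inl rfl, fun x => Or.inr ⟨x, rfl⟩⟩
  rintro c (rfl | ⟨x, rfl⟩)
  · exact ⟨0, trivial⟩
  · exact ⟨x, rfl⟩

lemma compat_c01 : ∀ c ∈ B3, Compatible c01 c := by
  rintro c (rfl | ⟨x, rfl⟩)
  · exact Or.inl (Set.subset_univ _)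
  · fin_cases x
    · exact Or.inr (Or.inl (by intro z hz; rw [hz]; left; rfl))
    · exact Or.inr (Or.inl (by intro z hz; rw [hz]; right; rfl))
    · refine Or.inr (Or.inr ?_)
      ext z
      simp only [c01, Set.mem_inter_iff, Set.mem_insert_iff, Set.mem_singleton_iff,
        Set.mem_empty_iff_false, iff_false]
      rintro ⟨rfl | rfl, h⟩ <;> exact absurd h (by decide)

lemma compat_symm {X : Type*} {c₁ c₂ : Set X} (h : Compatible c₁ c₂) : Compatible c₂ c₁ := by
  rcases h with h | h | h
  · exact Or.inr (Or.inl h)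
  · exact Or.inl h
  · exact Or.inr (Or.inr (by rwa [Set.inter_comm]))

lemma isHierarchy_H3 : IsHierarchy H3 := by
  refine ⟨?_, ?_, Or.inr (Or.inl rfl), fun x => Or.inr (Or.inr ⟨x, rfl⟩)⟩
  · rintro c (rfl | hc)
    · exact ⟨0, Or.inl rfl⟩
    · exact isHierarchy_B3.1 c hc
  · rintro c₁ (rfl | h₁) c₂ (rfl | h₂)
    · exact Or.inl (subset_refl _)
    · exact compat_c01 c₂ h₂
    · exact compat_symm (compat_c01 c₁ h₁)
    · exact compat_B3 c₁ h₁ c₂ h₂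

lemma c01_not_mem_B3 : c01 ∉ B3 := by
  rintro (h | ⟨x, h⟩)
  · have : (2 : Fin 3) ∈ c01 := h ▸ Set.mem_univ _
    simp only [c01, Set.mem_insert_iff, Set.mem_singleton_iff] at this
    rcases this with h | h <;> exact absurd h (by decide)
  · have h0 : (0 : Fin 3) ∈ c01 := Or.inl rfl
    have h1 : (1 : Fin 3) ∈ c01 := Or.inr rfl
    rw [h] at h0 h1
    simp only [Set.mem_singleton_iff] at h0 h1
    exact absurd (h0.trans h1.symm) (by decide)

/-- A profile on `Fin 3` with `c01` in exactly the first `m` trees. -/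
def sepProfile (K m : ℕ) : Fin K → Hier 3 :=
  fun i => if (i : ℕ) < m then ⟨H3, isHierarchy_H3⟩ else ⟨B3, isHierarchy_B3⟩

lemma sepProfile_count {K m : ℕ} (hmK : m ≤ K) :
    ({i : Fin K | c01 ∈ (sepProfile K m i).1}).ncard = m := by
  have hset : {i : Fin K | c01 ∈ (sepProfile K m i).1}
      = (fun j : Fin m => Fin.castLE hmK j) '' Set.univ := by
    ext i
    simp only [Set.mem_setOf_eq, Set.image_univ, Set.mem_range, sepProfile]
    constructor
    · intro h
      by_cases hi : (i : ℕ) < m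
      · exact ⟨⟨(i : ℕ), hi⟩, by ext; simp⟩
      · simp only [hi, ↓reduceIte] at h
        exact absurd h c01_not_mem_B3
    · rintro ⟨j, rfl⟩
      simp only [show ((Fin.castLE hmK j : Fin K) : ℕ) < m from by simpa using j.2, ↓reduceIte]
      exact Or.inl rfl
  rw [hset, Set.ncard_image_of_injective _ (Fin.castLE_injective hmK), Set.ncard_univ]
  simp

end Sep

lemma phiMaj_injective :
    Function.Injective (fun p : ↥(Set.Ioc (1/2 : ℝ) 1) => phiMaj p.1 p.2.1 p.2.2) := by
  intro p q hpq
  by_contra hne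
  have hne' : (p : ℝ) ≠ (q : ℝ) := fun h => hne (Subtype.ext h)
  -- WLOG p < q, by symmetry we handle both cases with a general claim
  have key : ∀ a b : ↥(Set.Ioc (1/2 : ℝ) 1), (a : ℝ) < (b : ℝ) →
      phiMaj a.1 a.2.1 a.2.2 = phiMaj b.1 b.2.1 b.2.2 → False := by
    rintro ⟨a, ha1, ha2⟩ ⟨b, hb1, hb2⟩ hab heq
    simp only at hab heq
    set k : ℕ := ⌈1 / (b - a)⌉₊ with hk
    set K : ℕ := k + 1 with hKdef
    have hba : (0 : ℝ) < b - a := by linarith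
    have hKge : 1 / (b - a) ≤ (K : ℝ) := by
      calc 1 / (b - a) ≤ (k : ℝ) := Nat.le_ceil _
        _ ≤ (K : ℝ) := by rw [hKdef]; push_cast; linarith
    have haK : (0 : ℝ) ≤ a * (K : ℝ) := by positivity
    set m : ℕ := ⌈a * (K : ℝ)⌉₊ with hm
    have hm1 : a * (K : ℝ) ≤ (m : ℝ) := Nat.le_ceil _
    have hK1 : (1 : ℝ) ≤ (b - a) * (K : ℝ) := by
      rw [div_le_iff₀ hba] at hKge
      linarith [hKge]
    have hmlt : (m : ℝ) < b * (K : ℝ) := by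
      have := Nat.ceil_lt_add_one haK
      nlinarith
    have hmK : m ≤ K := by
      apply Nat.ceil_le.mpr
      have : (0:ℝ) ≤ (K:ℝ) := by positivity
      nlinarith
    -- evaluate the equal methods on the separating profile
    have heval : phiMaj a ha1 ha2 2 k (sepProfile K m) = phiMaj b hb1 hb2 2 k (sepProfile K m) := by
      rw [heq]
    have hmem : c01 ∈ (phiMaj a ha1 ha2 2 k (sepProfile K m)).1 := by
      show a * ((K : ℕ) : ℝ) ≤ _
      rw [sepProfile_count hmK]
      exact hm1
    rw [heval] at hmem
    have : b * ((K : ℕ) : ℝ) ≤ (m : ℝ) := by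
      have h := hmem
      show b * ((K : ℕ) : ℝ) ≤ _
      rw [← sepProfile_count hmK]
      exact h
    linarith
  rcases lt_or_gt_of_ne hne' with h | h
  · exact key p q h hpq
  · exact key q p h hpq.symm

/-- There are infinitely many consensus methods `φ = (φ_{n,k})_{n≥1,k≥1}`
(with `φ_{n,k}` mapping profiles of `k` hierarchies on `{1, …, n}` to
hierarchies on `{1, …, n}`) each of which is unanimous, anonymous, neutral,
refinement-stable and non-contradictory. -/
theorem infinitely_many_regular_refinementStable_noncontradictory :
    {φ : ∀ n k : ℕ, (Fin (k + 1) → Hier (n + 1)) → Hier (n + 1) |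
      ∀ n k : ℕ,
        -- unanimity
        (∀ H : Hier (n + 1), φ n k (fun _ => H) = H) ∧
        -- anonymity
        (∀ (P : Fin (k + 1) → Hier (n + 1)) (π : Equiv.Perm (Fin (k + 1))),
          φ n k (fun i => P (π i)) = φ n k P) ∧
        -- neutrality
        (∀ (P P' : Fin (k + 1) → Hier (n + 1)) (σ : Equiv.Perm (Fin (n + 1))),
          (∀ i, (P' i).1 = (Set.image σ) '' (P i).1) →
          (φ n k P').1 = (Set.image σ) '' (φ n k P).1) ∧
        -- refinement-stability
        (∀ P P' : Fin (k + 1) → Hier (n + 1),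
          (∀ i, (P i).1 ⊆ (P' i).1) → (φ n k P).1 ⊆ (φ n k P').1) ∧
        -- non-contradiction
        (∀ P : Fin (k + 1) → Hier (n + 1), ∀ c ∈ (φ n k P).1,
          ∃ i, ∀ c' ∈ (P i).1, Compatible c c')}.Infinite := by
  have hinf : (Set.Ioc (1/2 : ℝ) 1).Infinite := Set.Ioc_infinite (by norm_num)
  haveI : Infinite ↥(Set.Ioc (1/2 : ℝ) 1) := hinf.to_subtype
  apply Set.infinite_of_injective_forall_mem phiMaj_injective
  rintro ⟨p, hp1, hp2⟩ n k
  exact ⟨phiMaj_unanimous hp1 hp2, phiMaj_anonymous hp1 hp2,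
    phiMaj_neutral hp1 hp2, phiMaj_refinement hp1 hp2, phiMaj_noncontra hp1 hp2⟩
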